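/- Let V be a finite set and let ℓ : V × V → ℕ be a function (interpreted as a directed graph with an arc u → v labelled ℓ(u, v) whenever ℓ(u, v) ≥ 1). Suppose the directed graph is acyclic, i.e. the transitive closure of the relation { (u, v) : ℓ(u, v) ≥ 1 } is irreflexive. Then there exists an injective map θ : V → ℕ such that θ(v) is an odd prime for every v ∈ V, and for all distinct u, v ∈ V the exact multiplicity of the prime θ(u) in θ(v) − 1 equals ℓ(u, v); that is, θ(u)^ℓ(u,v) divides θ(v) − 1 but θ(u)^(ℓ(u,v)+1) does not. (Equivalently, every finite arc-labelled acyclic directed graph is isomorphic as a labelled directed graph to Π_n for some n, e.g. n the product of the primes θ(v).) -/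

import Mathlib

open Finset

private lemma key_extension {V : Type*} [Finite V] (ℓ : V × V → ℕ)
    (hacyclic : ∀ v : V, ¬ Relation.TransGen (fun u w => 1 ≤ ℓ (u, w)) v v) :
    ∀ (n : ℕ) (S : Finset V), S.card ≤ n →
    ∃ θ : V → ℕ, Set.InjOn θ S ∧ (∀ v ∈ S, (θ v).Prime ∧ Odd (θ v)) ∧
      ∀ u ∈ S, ∀ v ∈ S, u ≠ v →
        θ u ^ ℓ (u, v) ∣ θ v - 1 ∧ ¬ θ u ^ (ℓ (u, v) + 1) ∣ θ v - 1 := by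
  classical
  set rr : V → V → Prop := Relation.TransGen (fun u w => 1 ≤ ℓ (u, w)) with hrr
  haveI : IsTrans V (flip rr) := ⟨fun _ _ _ h1 h2 => Relation.TransGen.trans h2 h1⟩
  haveI : IsIrrefl V (flip rr) := ⟨fun a h => hacyclic a h⟩
  intro n
  induction n with
  | zero =>
    intro S hS
    refine ⟨fun _ => 3, ?_, ?_, ?_⟩ <;>
      simp_all [Finset.card_eq_zero.mp (Nat.le_zero.mp hS)]
  | succ n ih =>
    intro S hS
    rcases S.eq_empty_or_nonempty with rfl | hne
    · exact ih ∅ (by simp)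
    -- pick an `rr`-maximal element of `S`
    obtain ⟨v, hvS, hmax⟩ := (Finite.wellFounded_of_trans_of_irrefl (flip rr)).has_min
      (↑S : Set V) (by exact_mod_cast hne)
    replace hmax : ∀ x ∈ S, ¬ rr v x := fun x hx => hmax x hx
    set S' : Finset V := S.erase v with hS'
    have hS'card : S'.card ≤ n := by
      have h1 : S'.card = S.card - 1 := Finset.card_erase_of_mem hvS
      have h2 : 0 < S.card := Finset.card_pos.mpr hne
      omega
    obtain ⟨θ, hinj, hpr, hdvd⟩ := ih S' hS'card
    have hvS' : v ∉ S' := Finset.notMem_erase v S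
    have hθ3 : ∀ u ∈ S', 3 ≤ θ u := by
      intro u hu
      obtain ⟨hp, ho⟩ := hpr u hu
      have h2 : θ u ≠ 2 := by
        intro h
        rw [h] at ho
        exact (Nat.not_odd_iff_even.mpr even_two) ho
      have := hp.two_le
      omega
    -- set up CRT data
    set s : V → ℕ := fun u => θ u ^ (ℓ (u, v) + 1) with hs
    have hs0 : ∀ u ∈ S', s u ≠ 0 := fun u hu =>
      pow_ne_zero _ (hpr u hu).1.pos.ne'
    have hpp : (↑S' : Set V).Pairwise (Function.onFun Nat.Coprime s) := by
      intro a ha b hb hab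
      exact Nat.Coprime.pow _ _ <|
        (Nat.coprime_primes (hpr a ha).1 (hpr b hb).1).mpr
          (fun h => hab (hinj ha hb h))
    obtain ⟨k, hk⟩ := Nat.chineseRemainderOfFinset (fun u => 1 + θ u ^ ℓ (u, v)) s S' hs0 hpp
    set M : ℕ := ∏ u ∈ S', s u with hM
    haveI : NeZero M := ⟨Finset.prod_ne_zero_iff.mpr hs0⟩
    -- `k` is coprime to `M`
    have hknd : ∀ u ∈ S', ¬ θ u ∣ k := by
      intro u hu hdk
      have h1 : k ≡ 1 + θ u ^ ℓ (u, v) [MOD θ u] :=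
        (hk u hu).of_dvd (dvd_pow_self _ (Nat.succ_ne_zero _))
      have h2 : θ u ∣ 1 + θ u ^ ℓ (u, v) :=
        Nat.modEq_zero_iff_dvd.mp (((Nat.modEq_zero_iff_dvd.mpr hdk).symm.trans h1).symm)
      rcases Nat.eq_zero_or_pos (ℓ (u, v)) with h | h
      · rw [h, pow_zero] at h2
        have := Nat.le_of_dvd (by norm_num) h2
        have := hθ3 u hu
        omega
      · have : θ u ∣ 1 := (Nat.dvd_add_right (dvd_pow_self _ h.ne')).mp (by rwa [add_comm] at h2)
        exact (hpr u hu).1.one_lt.ne' (Nat.dvd_one.mp this)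
    have hcop : Nat.Coprime k M :=
      Nat.Coprime.prod_right fun u hu =>
        Nat.Coprime.pow_right _ <|
          Nat.coprime_comm.mp <| ((hpr u hu).1.coprime_iff_not_dvd).mpr (hknd u hu)
    -- Dirichlet
    obtain ⟨p, hpgt, hp, hpa⟩ :=
      Nat.forall_exists_prime_gt_and_eq_mod
        (a := ((k : ℕ) : ZMod M)) ((ZMod.isUnit_iff_coprime k M).mpr hcop) (S'.sup θ + 2)
    have hpk : p ≡ k [MOD M] := (ZMod.natCast_eq_natCast_iff _ _ _).mp hpa
    have hplt : ∀ u ∈ S', θ u < p := fun u hu =>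
      lt_of_le_of_lt (Finset.le_sup hu) (by omega)
    have hp2 : 2 < p := by omega
    have hpodd : Odd p := hp.odd_of_ne_two (by omega)
    -- exact multiplicity facts for `p - 1`
    have hexact : ∀ u ∈ S',
        θ u ^ ℓ (u, v) ∣ p - 1 ∧ ¬ θ u ^ (ℓ (u, v) + 1) ∣ p - 1 := by
      intro u hu
      have hmod : p ≡ 1 + θ u ^ ℓ (u, v) [MOD s u] :=
        (hpk.of_dvd (Finset.dvd_prod_of_mem s hu)).trans (hk u hu)
      have hsub : p - 1 ≡ θ u ^ ℓ (u, v) [MOD s u] := by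
        apply Nat.ModEq.add_right_cancel' 1
        rw [Nat.sub_add_cancel hp.pos]
        simpa [add_comm] using hmod
      constructor
      · have h2 : p - 1 ≡ θ u ^ ℓ (u, v) [MOD θ u ^ ℓ (u, v)] :=
          hsub.of_dvd (pow_dvd_pow _ (Nat.le_succ _))
        exact Nat.modEq_zero_iff_dvd.mp (h2.trans (Nat.modEq_zero_iff_dvd.mpr dvd_rfl))
      · intro hdd
        have h0 : (0 : ℕ) ≡ θ u ^ ℓ (u, v) [MOD s u] :=
          (Nat.modEq_zero_iff_dvd.mpr hdd).symm.trans hsub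
        have : s u ∣ θ u ^ ℓ (u, v) := Nat.modEq_zero_iff_dvd.mp h0.symm
        have hle := Nat.le_of_dvd (pow_pos (hpr u hu).1.pos _) this
        exact absurd hle (not_le.mpr (Nat.pow_lt_pow_succ (hpr u hu).1.one_lt))
    -- the extended assignment
    set θ' : V → ℕ := Function.update θ v p with hθ'
    have hθ'v : θ' v = p := Function.update_self _ _ _
    have hθ'u : ∀ u ∈ S', θ' u = θ u := fun u hu =>
      Function.update_of_ne (by rintro rfl; exact hvS' hu) _ _
    have hmemS : ∀ u ∈ S, u ≠ v → u ∈ S' := fun u hu h => Finset.mem_erase.mpr ⟨h, hu⟩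
    refine ⟨θ', ?_, ?_, ?_⟩
    · intro a ha b hb hab
      by_cases hav : a = v <;> by_cases hbv : b = v
      · rw [hav, hbv]
      · exfalso
        rw [hav, hθ'v, hθ'u b (hmemS b hb hbv)] at hab
        exact (hplt b (hmemS b hb hbv)).ne' hab
      · exfalso
        rw [hbv, hθ'v, hθ'u a (hmemS a ha hav)] at hab
        exact (hplt a (hmemS a ha hav)).ne hab
      · rw [hθ'u a (hmemS a ha hav), hθ'u b (hmemS b hb hbv)] at hab
        exact hinj (hmemS a ha hav) (hmemS b hb hbv) hab
    · intro u hu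
      by_cases huv : u = v
      · rw [huv, hθ'v]; exact ⟨hp, hpodd⟩
      · rw [hθ'u u (hmemS u hu huv)]; exact hpr u (hmemS u hu huv)
    · intro a ha b hb hab
      by_cases hav : a = v <;> by_cases hbv : b = v
      · exact absurd (hav.trans hbv.symm) hab
      · -- a = v, b ∈ S' : need ℓ (v, b) = 0 by maximality
        have hbS' := hmemS b hb hbv
        subst hav
        have hl0 : ℓ (a, b) = 0 := by
          by_contra h
          exact hmax b hb (Relation.TransGen.single (by omega))
        rw [hθ'v, hθ'u b hbS', hl0]
        refine ⟨by simp, ?_⟩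
        intro hdd
        rw [pow_one] at hdd
        have := Nat.le_of_dvd (by have := hθ3 b hbS'; omega) hdd
        have := hplt b hbS'
        omega
      · -- b = v, a ∈ S'
        have haS' := hmemS a ha hav
        subst hbv
        rw [hθ'v, hθ'u a haS']
        exact hexact a haS'
      · rw [hθ'u a (hmemS a ha hav), hθ'u b (hmemS b hb hbv)]
        exact hdvd a (hmemS a ha hav) b (hmemS b hb hbv) hab

/-- Proposition 13.1. Every finite arc-labelled acyclic directed graph is
isomorphic, as a labelled directed graph, to `Π_n` for some `n`: there is an injective
assignment `θ` of odd primes to the vertices such that for all distinct vertices `u, v`,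
the exact multiplicity of `θ u` in `θ v − 1` equals the label `ℓ (u, v)`. -/
theorem labelled_acyclic_digraph_realised_by_primes
    (V : Type*) [Finite V] (ℓ : V × V → ℕ)
    (hacyclic : ∀ v : V, ¬ Relation.TransGen (fun u w => 1 ≤ ℓ (u, w)) v v) :
    ∃ θ : V → ℕ, Function.Injective θ ∧
      (∀ v, (θ v).Prime ∧ Odd (θ v)) ∧
      ∀ u v : V, u ≠ v →
        θ u ^ ℓ (u, v) ∣ θ v - 1 ∧ ¬ θ u ^ (ℓ (u, v) + 1) ∣ θ v - 1 := by
  classical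
  cases nonempty_fintype V
  obtain ⟨θ, hinj, hpr, hdvd⟩ :=
    key_extension ℓ hacyclic (Finset.univ.card) Finset.univ le_rfl
  exact ⟨θ, fun a b hab => hinj (Finset.mem_coe.mpr (Finset.mem_univ a))
      (Finset.mem_coe.mpr (Finset.mem_univ b)) hab,
    fun v => hpr v (Finset.mem_univ v),
    fun u v huv => hdvd u (Finset.mem_univ u) v (Finset.mem_univ v) huv⟩
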